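/- If RROA terminates, it returns an optimal matching: suppose at some step t the restricted optimal matching π^t with multipliers (u^t, v^t, T^t) satisfies u_i^t ≥ α_{iy} − T_{x_i y}^t for every i and every y ∈ Y \ Y_i^t, and v_j^t ≥ γ_{xj} + T_{x y_j}^t for every j and every x ∈ X \ X_j^t. Then π^t (extended by zeros) is an optimal solution of the unrestricted type-aggregated assignment LP. -/
import Mathlib


open Finset

/-- If the RROA termination condition holds (the restricted dual
multipliers satisfy the dual inequalities also outside the choice sets), then the
restricted optimal matching, extended by zeros, solves the unrestricted
type-aggregated assignment LP. -/
theorem stmt8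
    {I J X Y : Type*} [Fintype I] [Fintype J] [Fintype X] [Fintype Y]
    [DecidableEq X] [DecidableEq Y]
    (xm : I → X) (ym : J → Y)
    (Φ : X → Y → ℝ) (ε : I → Y → ℝ) (ε0 : I → ℝ)
    (η : X → J → ℝ) (η0 : J → ℝ)
    (α : I → Y → ℝ) (γ : X → J → ℝ)
    (hα : ∀ i y, α i y = Φ (xm i) y / 2 + ε i y)
    (hγ : ∀ x j, γ x j = Φ x (ym j) / 2 + η x j)
    (Yc : I → Finset Y) (Xc : J → Finset X)
    -- π^t is feasible for the restricted LP (zero outside the choice sets)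
    (a : I → Y → ℝ) (a0 : I → ℝ) (b : X → J → ℝ) (b0 : J → ℝ)
    (ha : ∀ i y, 0 ≤ a i y) (ha0 : ∀ i, 0 ≤ a0 i)
    (hb : ∀ x j, 0 ≤ b x j) (hb0 : ∀ j, 0 ≤ b0 j)
    (haY : ∀ i y, y ∉ Yc i → a i y = 0)
    (hbX : ∀ j x, x ∉ Xc j → b x j = 0)
    (hfeasI : ∀ i, a0 i + ∑ y, a i y = 1)
    (hfeasJ : ∀ j, b0 j + ∑ x, b x j = 1)
    (hbal : ∀ x y, ∑ i ∈ univ.filter (fun i => xm i = x), a i y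
      = ∑ j ∈ univ.filter (fun j => ym j = y), b x j)
    -- multipliers: restricted dual feasibility plus strong duality
    (u : I → ℝ) (v : J → ℝ) (T : X → Y → ℝ)
    (hu0 : ∀ i, ε0 i ≤ u i) (hv0 : ∀ j, η0 j ≤ v j)
    (huY : ∀ i, ∀ y ∈ Yc i, α i y - T (xm i) y ≤ u i)
    (hvX : ∀ j, ∀ x ∈ Xc j, γ x j + T x (ym j) ≤ v j)
    (hstrong : ∑ i, u i + ∑ j, v j
      = ∑ i, (a0 i * ε0 i + ∑ y, a i y * α i y)
        + ∑ j, (b0 j * η0 j + ∑ x, b x j * γ x j))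
    -- termination condition: dual inequalities hold outside the choice sets
    (htermI : ∀ i, ∀ y, y ∉ Yc i → α i y - T (xm i) y ≤ u i)
    (htermJ : ∀ j, ∀ x, x ∉ Xc j → γ x j + T x (ym j) ≤ v j) :
    -- conclusion: π^t is optimal for the unrestricted LP
    ∀ (a' : I → Y → ℝ) (a0' : I → ℝ) (b' : X → J → ℝ) (b0' : J → ℝ),
      (∀ i y, 0 ≤ a' i y) → (∀ i, 0 ≤ a0' i) → (∀ x j, 0 ≤ b' x j) → (∀ j, 0 ≤ b0' j) →
      (∀ i, a0' i + ∑ y, a' i y = 1) → (∀ j, b0' j + ∑ x, b' x j = 1) →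
      (∀ x y, ∑ i ∈ univ.filter (fun i => xm i = x), a' i y
        = ∑ j ∈ univ.filter (fun j => ym j = y), b' x j) →
      ∑ i, (a0' i * ε0 i + ∑ y, a' i y * α i y)
        + ∑ j, (b0' j * η0 j + ∑ x, b' x j * γ x j)
      ≤ ∑ i, (a0 i * ε0 i + ∑ y, a i y * α i y)
        + ∑ j, (b0 j * η0 j + ∑ x, b x j * γ x j) := by

  intro a' a0' b' b0' ha' ha0' hb' hb0' hfeasI' hfeasJ' hbal'
  -- dual bounds valid everywhere
  have hαu : ∀ i y, α i y ≤ u i + T (xm i) y := by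
    intro i y
    by_cases h : y ∈ Yc i
    · linarith [huY i y h]
    · linarith [htermI i y h]
  have hγv : ∀ x j, γ x j ≤ v j - T x (ym j) := by
    intro x j
    by_cases h : x ∈ Xc j
    · linarith [hvX j x h]
    · linarith [htermJ j x h]
  -- the cross terms cancel by balance
  have Scancel : ∑ i, ∑ y, a' i y * T (xm i) y = ∑ j, ∑ x, b' x j * T x (ym j) := by
    have h1 : ∑ i, ∑ y, a' i y * T (xm i) y
        = ∑ y, ∑ x, (∑ i ∈ univ.filter (fun i => xm i = x), a' i y) * T x y := by
      rw [Finset.sum_comm]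
      refine Finset.sum_congr rfl fun y _ => ?_
      rw [← Finset.sum_fiberwise univ xm (fun i => a' i y * T (xm i) y)]
      refine Finset.sum_congr rfl fun x _ => ?_
      rw [Finset.sum_mul]
      refine Finset.sum_congr rfl fun i hi => ?_
      rw [(Finset.mem_filter.mp hi).2]
    have h2 : ∑ j, ∑ x, b' x j * T x (ym j)
        = ∑ y, ∑ x, (∑ j ∈ univ.filter (fun j => ym j = y), b' x j) * T x y := by
      rw [Finset.sum_comm]
      conv_rhs => rw [Finset.sum_comm]
      refine Finset.sum_congr rfl fun x _ => ?_
      rw [← Finset.sum_fiberwise univ ym (fun j => b' x j * T x (ym j))]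
      refine Finset.sum_congr rfl fun y _ => ?_
      rw [Finset.sum_mul]
      refine Finset.sum_congr rfl fun j hj => ?_
      rw [(Finset.mem_filter.mp hj).2]
    rw [h1, h2]
    refine Finset.sum_congr rfl fun y _ => Finset.sum_congr rfl fun x _ => ?_
    rw [hbal' x y]
  -- primal objective ≤ dual value, I side
  have hI : ∑ i, (a0' i * ε0 i + ∑ y, a' i y * α i y)
      ≤ ∑ i, u i + ∑ i, ∑ y, a' i y * T (xm i) y := by
    rw [← Finset.sum_add_distrib]
    refine Finset.sum_le_sum fun i _ => ?_
    have h1 : a0' i * ε0 i ≤ a0' i * u i :=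
      mul_le_mul_of_nonneg_left (hu0 i) (ha0' i)
    have h2 : ∑ y, a' i y * α i y ≤ ∑ y, a' i y * (u i + T (xm i) y) :=
      Finset.sum_le_sum fun y _ => mul_le_mul_of_nonneg_left (hαu i y) (ha' i y)
    have h3 : ∑ y, a' i y * (u i + T (xm i) y)
        = (∑ y, a' i y) * u i + ∑ y, a' i y * T (xm i) y := by
      rw [Finset.sum_mul, ← Finset.sum_add_distrib]
      exact Finset.sum_congr rfl fun y _ => by ring
    have h4 : a0' i + ∑ y, a' i y = 1 := hfeasI' i
    calc a0' i * ε0 i + ∑ y, a' i y * α i y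
        ≤ a0' i * u i + ((∑ y, a' i y) * u i + ∑ y, a' i y * T (xm i) y) := by
          rw [← h3]; exact add_le_add h1 h2
      _ = (a0' i + ∑ y, a' i y) * u i + ∑ y, a' i y * T (xm i) y := by ring
      _ = u i + ∑ y, a' i y * T (xm i) y := by rw [h4, one_mul]
  have hJ : ∑ j, (b0' j * η0 j + ∑ x, b' x j * γ x j)
      ≤ ∑ j, v j - ∑ j, ∑ x, b' x j * T x (ym j) := by
    rw [← Finset.sum_sub_distrib]
    refine Finset.sum_le_sum fun j _ => ?_
    have h1 : b0' j * η0 j ≤ b0' j * v j :=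
      mul_le_mul_of_nonneg_left (hv0 j) (hb0' j)
    have h2 : ∑ x, b' x j * γ x j ≤ ∑ x, b' x j * (v j - T x (ym j)) :=
      Finset.sum_le_sum fun x _ => mul_le_mul_of_nonneg_left (hγv x j) (hb' x j)
    have h3 : ∑ x, b' x j * (v j - T x (ym j))
        = (∑ x, b' x j) * v j - ∑ x, b' x j * T x (ym j) := by
      rw [Finset.sum_mul, ← Finset.sum_sub_distrib]
      exact Finset.sum_congr rfl fun x _ => by ring
    have h4 : b0' j + ∑ x, b' x j = 1 := hfeasJ' j
    calc b0' j * η0 j + ∑ x, b' x j * γ x j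
        ≤ b0' j * v j + ((∑ x, b' x j) * v j - ∑ x, b' x j * T x (ym j)) := by
          rw [← h3]; exact add_le_add h1 h2
      _ = (b0' j + ∑ x, b' x j) * v j - ∑ x, b' x j * T x (ym j) := by ring
      _ = v j - ∑ x, b' x j * T x (ym j) := by rw [h4, one_mul]
  calc ∑ i, (a0' i * ε0 i + ∑ y, a' i y * α i y)
        + ∑ j, (b0' j * η0 j + ∑ x, b' x j * γ x j)
      ≤ (∑ i, u i + ∑ i, ∑ y, a' i y * T (xm i) y)
        + (∑ j, v j - ∑ j, ∑ x, b' x j * T x (ym j)) := add_le_add hI hJ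
    _ = ∑ i, u i + ∑ j, v j := by rw [Scancel]; ring
    _ = _ := hstrong
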